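/- The point P = (2t³(t+1), 2t²(t+1)²(t-2)²) on the elliptic curve E : v² = u(u - 8t(t²-1))(u - (t²-1)(t+2)²) over ℚ(t) has infinite order in E(ℚ(t)). -/

import Mathlib

open RatFunc

/-- The elliptic curve `v² = u(u - 8t(t²-1))(u - (t²-1)(t+2)²)` over `ℚ(t)`, in affine
Weierstrass form `v² = u³ - (α+β)u² + αβ·u` with `α = 8t(t²-1)`, `β = (t²-1)(t+2)²`. -/
noncomputable def Ecurve : WeierstrassCurve.Affine (RatFunc ℚ) :=
  { a₁ := 0
    a₂ := -(8 * X * (X ^ 2 - 1) + (X ^ 2 - 1) * (X + 2) ^ 2)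
    a₃ := 0
    a₄ := 8 * X * (X ^ 2 - 1) * ((X ^ 2 - 1) * (X + 2) ^ 2)
    a₆ := 0 }

open WeierstrassCurve.Affine

instance : CharZero (RatFunc ℚ) :=
  charZero_of_injective_algebraMap (algebraMap ℚ (RatFunc ℚ)).injective

/-! ### Non-square criteria in `ℚ(t)` -/

lemma even_rootMultiplicity_of_isSquare {p : Polynomial ℚ} (hp0 : p ≠ 0) (c : ℚ)
    (h : IsSquare (algebraMap (Polynomial ℚ) (RatFunc ℚ) p)) :
    Even (Polynomial.rootMultiplicity c p) := by
  obtain ⟨r, hr⟩ := h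
  have hr0 : r ≠ 0 := by
    rintro rfl
    exact hp0 ((RatFunc.algebraMap_injective ℚ) (by simpa using hr))
  have hd0 : r.denom ≠ 0 := r.denom_ne_zero
  have hn0 : r.num ≠ 0 := RatFunc.num_ne_zero hr0
  have hdm : algebraMap (Polynomial ℚ) (RatFunc ℚ) r.denom ≠ 0 :=
    RatFunc.algebraMap_ne_zero hd0
  have h1 : r * algebraMap (Polynomial ℚ) (RatFunc ℚ) r.denom
      = algebraMap (Polynomial ℚ) (RatFunc ℚ) r.num :=
    ((div_eq_iff hdm).mp (RatFunc.num_div_denom r)).symm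
  have key : p * (r.denom * r.denom) = r.num * r.num := by
    apply RatFunc.algebraMap_injective ℚ
    rw [map_mul, map_mul, map_mul, hr, ← h1]; ring
  have hmul := congrArg (Polynomial.rootMultiplicity c) key
  rw [Polynomial.rootMultiplicity_mul (mul_ne_zero hp0 (mul_ne_zero hd0 hd0)),
      Polynomial.rootMultiplicity_mul (mul_ne_zero hd0 hd0),
      Polynomial.rootMultiplicity_mul (mul_ne_zero hn0 hn0)] at hmul
  exact ⟨Polynomial.rootMultiplicity c r.num - Polynomial.rootMultiplicity c r.denom, by omega⟩

lemma not_isSquare_algebraMap (c : ℚ) (k : ℕ) (hk : Odd k) (q : Polynomial ℚ)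
    (hq : q.eval c ≠ 0) :
    ¬ IsSquare (algebraMap (Polynomial ℚ) (RatFunc ℚ)
      ((Polynomial.X - Polynomial.C c) ^ k * q)) := by
  have hq0 : q ≠ 0 := fun h => hq (by simp [h])
  have hXc : (Polynomial.X - Polynomial.C c) ≠ (0 : Polynomial ℚ) :=
    Polynomial.X_sub_C_ne_zero c
  intro h
  have := even_rootMultiplicity_of_isSquare (mul_ne_zero (pow_ne_zero _ hXc) hq0) c h
  rw [Polynomial.rootMultiplicity_mul (mul_ne_zero (pow_ne_zero _ hXc) hq0),
      Polynomial.rootMultiplicity_X_sub_C_pow,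
      Polynomial.rootMultiplicity_eq_zero (by simpa [Polynomial.IsRoot] using hq)] at this
  obtain ⟨j, hj⟩ := hk
  obtain ⟨i, hi⟩ := this
  omega

lemma not_isSquare' (f : RatFunc ℚ) (c : ℚ) (k : ℕ) (hk : Odd k) (q : Polynomial ℚ)
    (hq : q.eval c ≠ 0)
    (hf : f = algebraMap (Polynomial ℚ) (RatFunc ℚ) ((Polynomial.X - Polynomial.C c) ^ k * q)) :
    ¬ IsSquare f := hf ▸ not_isSquare_algebraMap c k hk q hq

lemma nsq_xP : ¬ IsSquare (2 * X ^ 3 * (X + 1) : RatFunc ℚ) := by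
  apply not_isSquare' _ (-1) 1 odd_one (2 * Polynomial.X ^ 3) (by norm_num)
  simp only [Polynomial.C_0, Polynomial.C_1, Polynomial.C_neg, map_mul, map_pow, map_sub,
    map_add, map_one, map_zero, map_ofNat, map_neg, RatFunc.algebraMap_X, RatFunc.algebraMap_C]
  ring

lemma nsq_B : ¬ IsSquare (8 * X * (X ^ 2 - 1) * ((X ^ 2 - 1) * (X + 2) ^ 2) : RatFunc ℚ) := by
  apply not_isSquare' _ 0 1 odd_one (8 * (Polynomial.X ^ 2 - 1) ^ 2 * (Polynomial.X + 2) ^ 2)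
    (by norm_num)
  simp only [Polynomial.C_0, Polynomial.C_1, Polynomial.C_neg, map_mul, map_pow, map_sub,
    map_add, map_one, map_zero, map_ofNat, map_neg, RatFunc.algebraMap_X, RatFunc.algebraMap_C]
  -- push_cast
  ring

lemma nsq_aa : ¬ IsSquare (8 * X * (X ^ 2 - 1) : RatFunc ℚ) := by
  apply not_isSquare' _ 0 1 odd_one (8 * (Polynomial.X ^ 2 - 1)) (by norm_num)
  simp only [Polynomial.C_0, Polynomial.C_1, Polynomial.C_neg, map_mul, map_pow, map_sub,
    map_add, map_one, map_zero, map_ofNat, map_neg, RatFunc.algebraMap_X, RatFunc.algebraMap_C]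
  -- push_cast
  ring

lemma nsq_bb : ¬ IsSquare ((X ^ 2 - 1) * (X + 2) ^ 2 : RatFunc ℚ) := by
  apply not_isSquare' _ 1 1 odd_one ((Polynomial.X + 1) * (Polynomial.X + 2) ^ 2) (by norm_num)
  simp only [Polynomial.C_0, Polynomial.C_1, Polynomial.C_neg, map_mul, map_pow, map_sub,
    map_add, map_one, map_zero, map_ofNat, map_neg, RatFunc.algebraMap_X, RatFunc.algebraMap_C]
  -- push_cast
  ring

lemma nsq5 : ¬ IsSquare
    (8 * X * (X ^ 2 - 1) * ((X ^ 2 - 1) * (X + 2) ^ 2) * (2 * X ^ 3 * (X + 1)) : RatFunc ℚ) := by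
  apply not_isSquare' _ (-1) 3 (by decide)
    (16 * Polynomial.X ^ 4 * (Polynomial.X - 1) ^ 2 * (Polynomial.X + 2) ^ 2) (by norm_num)
  simp only [Polynomial.C_0, Polynomial.C_1, Polynomial.C_neg, map_mul, map_pow, map_sub,
    map_add, map_one, map_zero, map_ofNat, map_neg, RatFunc.algebraMap_X, RatFunc.algebraMap_C]
  -- push_cast
  ring

lemma nsq6 : ¬ IsSquare
    (8 * X * (X ^ 2 - 1) * (2 * X ^ 3 * (X + 1) - (X ^ 2 - 1) * (X + 2) ^ 2)
      * (2 * X ^ 3 * (X + 1) - 8 * X * (X ^ 2 - 1)) : RatFunc ℚ) := by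
  apply not_isSquare' _ 1 1 odd_one
    (16 * Polynomial.X ^ 2 * (Polynomial.X + 1) ^ 4 * (Polynomial.X - 2) ^ 4) (by norm_num)
  simp only [Polynomial.C_0, Polynomial.C_1, Polynomial.C_neg, map_mul, map_pow, map_sub,
    map_add, map_one, map_zero, map_ofNat, map_neg, RatFunc.algebraMap_X, RatFunc.algebraMap_C]
  -- push_cast
  ring

lemma nsq7 : ¬ IsSquare
    ((X ^ 2 - 1) * (X + 2) ^ 2 * (2 * X ^ 3 * (X + 1) - 8 * X * (X ^ 2 - 1))
      * (2 * X ^ 3 * (X + 1) - (X ^ 2 - 1) * (X + 2) ^ 2) : RatFunc ℚ) := by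
  apply not_isSquare' _ 0 1 odd_one
    (2 * (Polynomial.X - 1) * (Polynomial.X + 1) ^ 4 * (Polynomial.X + 2) ^ 2
      * (Polynomial.X - 2) ^ 4) (by norm_num)
  simp only [Polynomial.C_0, Polynomial.C_1, Polynomial.C_neg, map_mul, map_pow, map_sub,
    map_add, map_one, map_zero, map_ofNat, map_neg, RatFunc.algebraMap_X, RatFunc.algebraMap_C]
  -- push_cast
  ring

/-! ### Basic facts about `Ecurve` -/

lemma Ea₁ : Ecurve.a₁ = 0 := rfl
lemma Ea₂ : Ecurve.a₂ = -(8 * X * (X ^ 2 - 1) + (X ^ 2 - 1) * (X + 2) ^ 2) := rfl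
lemma Ea₃ : Ecurve.a₃ = 0 := rfl
lemma Ea₄ : Ecurve.a₄ = 8 * X * (X ^ 2 - 1) * ((X ^ 2 - 1) * (X + 2) ^ 2) := rfl
lemma Ea₆ : Ecurve.a₆ = 0 := rfl

lemma EnegY (x y : RatFunc ℚ) : Ecurve.negY x y = -y := by
  simp [WeierstrassCurve.Affine.negY, Ea₁, Ea₃]

lemma Eeq {x y : RatFunc ℚ} (h : Ecurve.Equation x y) :
    y ^ 2 = x ^ 3 - (8 * X * (X ^ 2 - 1) + (X ^ 2 - 1) * (X + 2) ^ 2) * x ^ 2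
      + 8 * X * (X ^ 2 - 1) * ((X ^ 2 - 1) * (X + 2) ^ 2) * x := by
  rw [WeierstrassCurve.Affine.equation_iff, Ea₁, Ea₂, Ea₃, Ea₄, Ea₆] at h
  linear_combination h

open Classical in
/-- Classification of nontrivial 2-torsion points on `Ecurve`. -/
lemma two_torsion {x y : RatFunc ℚ} (h : Ecurve.Nonsingular x y)
    (hT : Point.some _ _ h + Point.some _ _ h = 0) :
    y = 0 ∧ (x = 0 ∨ x = 8 * X * (X ^ 2 - 1) ∨ x = (X ^ 2 - 1) * (X + 2) ^ 2) := by
  by_cases hy : y = Ecurve.negY x y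
  · rw [EnegY] at hy
    have hy0 : y = 0 := by
      have h2 : (2 : RatFunc ℚ) * y = 0 := by linear_combination hy
      rcases mul_eq_zero.mp h2 with h' | h'
      · exact absurd h' two_ne_zero
      · exact h'
    subst hy0
    refine ⟨rfl, ?_⟩
    have heq := Eeq h.1
    have hfac : x * (x - 8 * X * (X ^ 2 - 1)) * (x - (X ^ 2 - 1) * (X + 2) ^ 2) = 0 := by
      linear_combination -heq
    rcases mul_eq_zero.mp hfac with h' | h'
    · rcases mul_eq_zero.mp h' with h'' | h''
      · exact Or.inl h''
      · exact Or.inr (Or.inl (by linear_combination h''))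
    · exact Or.inr (Or.inr (by linear_combination h'))
  · rw [Point.add_self_of_Y_ne hy] at hT
    exact absurd hT (Point.some_ne_zero _)

open Classical in
/-- The `x`-coordinate of a doubled point on `Ecurve` is a square; moreover if it is zero then
`a₄ = αβ` is a square. -/
lemma double_x {x y x' y' : RatFunc ℚ} (h : Ecurve.Nonsingular x y)
    (h' : Ecurve.Nonsingular x' y')
    (hQ : Point.some _ _ h + Point.some _ _ h = Point.some _ _ h') :
    ∃ c : RatFunc ℚ, x' = c ^ 2 ∧
      (x' = 0 → IsSquare (8 * X * (X ^ 2 - 1) * ((X ^ 2 - 1) * (X + 2) ^ 2) : RatFunc ℚ)) := by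
  by_cases hy : y = Ecurve.negY x y
  · rw [Point.add_self_of_Y_eq hy] at hQ
    exact absurd hQ.symm (Point.some_ne_zero _)
  · have hy0 : y ≠ 0 := fun h0 => hy (by rw [EnegY, h0, neg_zero])
    rw [Point.add_self_of_Y_ne hy] at hQ
    have hx' : Ecurve.addX x x (Ecurve.slope x x y y) = x' := by
      injection hQ with h1 h2
    set A : RatFunc ℚ := -(8 * X * (X ^ 2 - 1) + (X ^ 2 - 1) * (X + 2) ^ 2) with hA
    set B : RatFunc ℚ := 8 * X * (X ^ 2 - 1) * ((X ^ 2 - 1) * (X + 2) ^ 2) with hB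
    have heq : y ^ 2 = x ^ 3 + A * x ^ 2 + B * x := by
      have := Eeq h.1; rw [hA, hB]; linear_combination this
    have hL : Ecurve.slope x x y y = (3 * x ^ 2 + 2 * A * x + B) / (2 * y) := by
      rw [WeierstrassCurve.Affine.slope_of_Y_ne rfl hy, EnegY, Ea₁, Ea₂, Ea₄, ← hA, ← hB]
      ring
    have key : (3 * x ^ 2 + 2 * A * x + B) ^ 2 - (A + 2 * x) * (4 * y ^ 2)
        = (x ^ 2 - B) ^ 2 := by
      rw [heq]; rw [hA, hB]; ring
    have h2y0 : (2 : RatFunc ℚ) * y ≠ 0 := mul_ne_zero two_ne_zero hy0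
    have hxc : x' = ((x ^ 2 - B) / (2 * y)) ^ 2 := by
      rw [← hx', WeierstrassCurve.Affine.addX, hL, Ea₁, Ea₂, ← hA]
      field_simp
      linear_combination key
    refine ⟨(x ^ 2 - B) / (2 * y), hxc, fun hx0 => ?_⟩
    rw [hx0] at hxc
    have hxB : x ^ 2 = B := by
      have h0 : ((x ^ 2 - B) / (2 * y)) ^ 2 = 0 := hxc.symm
      have h1 := pow_eq_zero_iff (n := 2) (by norm_num) |>.mp h0
      rcases div_eq_zero_iff.mp h1 with h2 | h2
      · linear_combination h2
      · exact absurd h2 h2y0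
    exact ⟨x, by rw [← hxB]; ring⟩

open Classical in
/-- the point `P = (2t³(t+1), 2t²(t+1)²(t-2)²)` on `E` has infinite order
in `E(ℚ(t))`, i.e. `nP ≠ O` for all `n ≥ 1`. -/
theorem stmt_15 :
    ∃ h : Ecurve.Nonsingular (2 * X ^ 3 * (X + 1)) (2 * X ^ 2 * (X + 1) ^ 2 * (X - 2) ^ 2),
      ∀ n : ℕ, 1 ≤ n → n • (WeierstrassCurve.Affine.Point.some _ _ h) ≠ 0 := by
  have hX0 : (X : RatFunc ℚ) ≠ 0 := RatFunc.X_ne_zero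
  have hX1 : (X + 1 : RatFunc ℚ) ≠ 0 := by
    have : (X + 1 : RatFunc ℚ)
        = algebraMap (Polynomial ℚ) (RatFunc ℚ) (Polynomial.X + 1) := by
      simp only [map_add, map_one, RatFunc.algebraMap_X]
    rw [this]
    exact RatFunc.algebraMap_ne_zero (fun hc => by
      have := congrArg (Polynomial.eval 0) hc; simp at this)
  have hX2 : (X - 2 : RatFunc ℚ) ≠ 0 := by
    have : (X - 2 : RatFunc ℚ)
        = algebraMap (Polynomial ℚ) (RatFunc ℚ) (Polynomial.X - 2) := by
      simp only [map_sub, map_ofNat, RatFunc.algebraMap_X]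
    rw [this]
    exact RatFunc.algebraMap_ne_zero (fun hc => by
      have := congrArg (Polynomial.eval 0) hc; simp at this)
  have hyP0 : (2 * X ^ 2 * (X + 1) ^ 2 * (X - 2) ^ 2 : RatFunc ℚ) ≠ 0 :=
    mul_ne_zero (mul_ne_zero (mul_ne_zero two_ne_zero (pow_ne_zero _ hX0))
      (pow_ne_zero _ hX1)) (pow_ne_zero _ hX2)
  have hxP0 : (2 * X ^ 3 * (X + 1) : RatFunc ℚ) ≠ 0 :=
    mul_ne_zero (mul_ne_zero two_ne_zero (pow_ne_zero _ hX0)) hX1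
  have hsub_a : (8 * X * (X ^ 2 - 1) : RatFunc ℚ) - 2 * X ^ 3 * (X + 1)
      = -(2 * X * (X + 1) * (X - 2) ^ 2) := by ring
  have hsub_b : ((X ^ 2 - 1) * (X + 2) ^ 2 : RatFunc ℚ) - 2 * X ^ 3 * (X + 1)
      = -((X + 1) ^ 2 * (X - 2) ^ 2) := by ring
  have hne_a : (8 * X * (X ^ 2 - 1) : RatFunc ℚ) ≠ 2 * X ^ 3 * (X + 1) := by
    rw [← sub_ne_zero, hsub_a]
    exact neg_ne_zero.mpr (mul_ne_zero (mul_ne_zero (mul_ne_zero two_ne_zero hX0) hX1)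
      (pow_ne_zero _ hX2))
  have hne_b : ((X ^ 2 - 1) * (X + 2) ^ 2 : RatFunc ℚ) ≠ 2 * X ^ 3 * (X + 1) := by
    rw [← sub_ne_zero, hsub_b]
    exact neg_ne_zero.mpr (mul_ne_zero (pow_ne_zero _ hX1) (pow_ne_zero _ hX2))
  have hne_0 : (0 : RatFunc ℚ) ≠ 2 * X ^ 3 * (X + 1) := fun hc => hxP0 hc.symm
  have hP : Ecurve.Nonsingular (2 * X ^ 3 * (X + 1)) (2 * X ^ 2 * (X + 1) ^ 2 * (X - 2) ^ 2) := by
    rw [WeierstrassCurve.Affine.nonsingular_iff]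
    constructor
    · rw [WeierstrassCurve.Affine.equation_iff, Ea₁, Ea₂, Ea₃, Ea₄, Ea₆]
      ring
    · right
      rw [Ea₁, Ea₃]
      intro hc
      apply hyP0
      have h2 : (2 : RatFunc ℚ) * (2 * X ^ 2 * (X + 1) ^ 2 * (X - 2) ^ 2) = 0 := by
        linear_combination hc
      rcases mul_eq_zero.mp h2 with h' | h'
      · exact absurd h' two_ne_zero
      · exact h'
  refine ⟨hP, fun n hn hns => ?_⟩
  set P : Ecurve.Point := Point.some _ _ hP with hPdef
  have hfin : IsOfFinAddOrder P := isOfFinAddOrder_iff_nsmul_eq_zero.mpr ⟨n, by omega, hns⟩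
  set m : ℕ := addOrderOf P with hmdef
  have hmpos : 0 < m := hfin.addOrderOf_pos
  have hmP : m • P = 0 := addOrderOf_nsmul_eq_zero P
  have hm1 : m ≠ 1 := by
    intro h1
    apply Point.some_ne_zero hP
    rw [← one_nsmul (Point.some _ _ hP), ← hPdef, ← h1, hmP]
  rcases Nat.even_or_odd m with hme | hmo
  · -- m even : T = (m/2)•P is a nontrivial 2-torsion point
    obtain ⟨k, hk⟩ := hme
    have hk1 : 1 ≤ k := by omega
    cases hkP : k • P with
    | zero =>
      have hdvd : m ∣ k := addOrderOf_dvd_of_nsmul_eq_zero (by rw [hkP]; rfl)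
      have := Nat.le_of_dvd (by omega) hdvd
      omega
    | @some xT yT hT =>
      have hTT : Point.some _ _ hT + Point.some _ _ hT = 0 := by
        rw [← hkP, ← add_nsmul, ← hk, hmP]
      obtain ⟨hyT, hxT⟩ := two_torsion hT hTT
      subst hyT
      rcases Nat.even_or_odd k with hke | hko
      · -- k even : T is a double, so x(T) is a square
        obtain ⟨j, hj⟩ := hke
        have hQQ : (j • P) + (j • P) = Point.some _ _ hT := by rw [← add_nsmul, ← hj, hkP]
        cases hQ : j • P with
        | zero =>
          rw [hQ, ← Point.zero_def, zero_add] at hQQ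
          exact Point.some_ne_zero hT hQQ.symm
        | @some xQ yQ hQns =>
          rw [hQ] at hQQ
          obtain ⟨c, hc, hc0⟩ := double_x hQns hT hQQ
          rcases hxT with h0 | ha | hb
          · exact nsq_B (hc0 h0)
          · exact nsq_aa ⟨c, by rw [← ha, hc]; ring⟩
          · exact nsq_bb ⟨c, by rw [← hb, hc]; ring⟩
      · -- k odd : T + P is a double, so x(T + P) is a square
        obtain ⟨j, hj⟩ := hko
        have hQQ0 : ((j + 1) • P) + ((j + 1) • P) = Point.some _ _ hT + Point.some _ _ hP := by
          rw [← add_nsmul]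
          have h1 : (j + 1) + (j + 1) = k + 1 := by omega
          rw [h1, succ_nsmul, hkP, hPdef]
        rcases hxT with h0 | ha | hb
        · subst h0
          rw [Point.add_of_X_ne hne_0] at hQQ0
          cases hQ : (j + 1) • P with
          | zero =>
            rw [hQ, ← Point.zero_def, zero_add] at hQQ0
            exact Point.some_ne_zero _ hQQ0.symm
          | @some xQ yQ hQns =>
            rw [hQ] at hQQ0
            obtain ⟨c, hc, -⟩ := double_x hQns _ hQQ0
            rw [WeierstrassCurve.Affine.addX, WeierstrassCurve.Affine.slope_of_X_ne hne_0,
              Ea₁, Ea₂] at hc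
            refine nsq5 ⟨c * (2 * X ^ 3 * (X + 1)), ?_⟩
            have hd : (0 : RatFunc ℚ) - 2 * X ^ 3 * (X + 1) ≠ 0 :=
              sub_ne_zero.mpr hne_0
            field_simp at hc
            linear_combination hc
        · subst ha
          rw [Point.add_of_X_ne hne_a] at hQQ0
          cases hQ : (j + 1) • P with
          | zero =>
            rw [hQ, ← Point.zero_def, zero_add] at hQQ0
            exact Point.some_ne_zero _ hQQ0.symm
          | @some xQ yQ hQns =>
            rw [hQ] at hQQ0
            obtain ⟨c, hc, -⟩ := double_x hQns _ hQQ0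
            rw [WeierstrassCurve.Affine.addX, WeierstrassCurve.Affine.slope_of_X_ne hne_a,
              Ea₁, Ea₂] at hc
            refine nsq6 ⟨c * (2 * X ^ 3 * (X + 1) - 8 * X * (X ^ 2 - 1)), ?_⟩
            have hd : (8 * X * (X ^ 2 - 1) : RatFunc ℚ) - 2 * X ^ 3 * (X + 1) ≠ 0 :=
              sub_ne_zero.mpr hne_a
            have hd' : (8 * (X ^ 2 - 1) - 2 * X ^ 2 * (X + 1) : RatFunc ℚ) ≠ 0 :=
              fun h0 => hd (by linear_combination X * h0)
            field_simp at hc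
            linear_combination hc
        · subst hb
          rw [Point.add_of_X_ne hne_b] at hQQ0
          cases hQ : (j + 1) • P with
          | zero =>
            rw [hQ, ← Point.zero_def, zero_add] at hQQ0
            exact Point.some_ne_zero _ hQQ0.symm
          | @some xQ yQ hQns =>
            rw [hQ] at hQQ0
            obtain ⟨c, hc, -⟩ := double_x hQns _ hQQ0
            rw [WeierstrassCurve.Affine.addX, WeierstrassCurve.Affine.slope_of_X_ne hne_b,
              Ea₁, Ea₂] at hc
            refine nsq7 ⟨c * (2 * X ^ 3 * (X + 1) - (X ^ 2 - 1) * (X + 2) ^ 2), ?_⟩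
            have hd : ((X ^ 2 - 1) * (X + 2) ^ 2 : RatFunc ℚ) - 2 * X ^ 3 * (X + 1) ≠ 0 :=
              sub_ne_zero.mpr hne_b
            field_simp at hc
            linear_combination hc
  · -- m odd : P itself is a double, so x(P) is a square
    obtain ⟨j, hj⟩ := hmo
    have hQQ : ((j + 1) • P) + ((j + 1) • P) = Point.some _ _ hP := by
      rw [← add_nsmul]
      have h1 : (j + 1) + (j + 1) = m + 1 := by omega
      rw [h1, succ_nsmul, hmP, zero_add, hPdef]
    cases hQ : (j + 1) • P with
    | zero =>
      rw [hQ, ← Point.zero_def, zero_add] at hQQ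
      exact Point.some_ne_zero _ hQQ.symm
    | @some xQ yQ hQns =>
      rw [hQ] at hQQ
      obtain ⟨c, hc, -⟩ := double_x hQns hP hQQ
      exact nsq_xP ⟨c, by rw [hc]; ring⟩
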